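/- If a graph G admits a k-leaf root, then G admits a radial subtree model in which every subtree has radius at most k. (Concretely: subdivide every edge of the k-leaf root once and take each subtree to be the ball of radius k centered at the leaf corresponding to each vertex.) -/

import Mathlib

open SimpleGraph

/-- A subtree model of `G` on a tree `T`: each vertex gets a nonempty connected
subtree, and subtrees of distinct vertices intersect iff the vertices are adjacent. -/
def IsSubtreeModel {V W : Type*} (G : SimpleGraph V) (T : SimpleGraph W) (S : V → Set W) : Prop :=
  T.IsTree ∧ (∀ v : V, (T.induce (S v)).Connected) ∧
    ∀ u v : V, u ≠ v → ((S u ∩ S v).Nonempty ↔ G.Adj u v)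

/-- A radial subtree model: a subtree model whose subtrees are balls with
centers `c v` and radii `r v`. -/
def IsRSModel {V W : Type*} (G : SimpleGraph V) (T : SimpleGraph W) (c : V → W) (r : V → ℕ) : Prop :=
  IsSubtreeModel G T (fun v => {x | T.dist x (c v) ≤ r v})

/-- A leaf of a tree: a vertex with exactly one neighbor. -/
def IsLeafNode {W : Type*} (T : SimpleGraph W) (x : W) : Prop := ∃! y, T.Adj x y

/-- A `k`-leaf root of `G`: a tree `T` with a bijection `τ` from `V(G)` onto the
leaves of `T` such that distinct vertices are adjacent iff their leaves are at
distance at most `k` in `T`. -/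
def IsLeafRoot {V W : Type*} (G : SimpleGraph V) (T : SimpleGraph W) (τ : V → W) (k : ℕ) : Prop :=
  T.IsTree ∧ Function.Injective τ ∧ (∀ v : V, IsLeafNode T (τ v)) ∧
    (∀ x : W, IsLeafNode T x → ∃ v : V, τ v = x) ∧
    ∀ u v : V, u ≠ v → (G.Adj u v ↔ T.dist (τ u) (τ v) ≤ k)

namespace LeafRootAux


variable {W : Type*} {T : SimpleGraph W}

/-- In a connected graph, every ball (as induced subgraph) is connected. -/
lemma ball_reach (hT : T.Connected) (c : W) (r : ℕ) :
    ∀ (n : ℕ) (x : W) (hx : T.dist x c ≤ r), T.dist x c = n →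
      (T.induce {z | T.dist z c ≤ r}).Reachable ⟨x, hx⟩ ⟨c, by simp [dist_self]⟩ := by
  intro n
  induction n with
  | zero =>
    intro x hx hd
    have : x = c := (hT.dist_eq_zero_iff).mp hd
    subst this
    rfl
  | succ n IH =>
    intro x hx hd
    obtain ⟨w, hw⟩ := hT.exists_walk_length_eq_dist x c
    rw [hd] at hw
    cases w with
    | nil => simp at hw
    | @cons _ y _ hadj w' =>
      simp only [Walk.length_cons, Nat.succ_inj] at hw
      have hy_le : T.dist y c ≤ n := hw ▸ dist_le w'
      have hy_ge : n ≤ T.dist y c := by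
        have h1 : T.dist x c ≤ T.dist x y + T.dist y c := hT.dist_triangle
        have h2 : T.dist x y ≤ 1 := dist_le (Walk.cons hadj Walk.nil)
        omega
      have hy : T.dist y c = n := le_antisymm hy_le hy_ge
      have hyr : T.dist y c ≤ r := by omega
      have hadj' : (T.induce {z | T.dist z c ≤ r}).Adj ⟨x, hx⟩ ⟨y, hyr⟩ := by
        simpa using hadj
      exact hadj'.reachable.trans (IH y hyr hy)

lemma ball_connected (hT : T.Connected) (c : W) (r : ℕ) :
    (T.induce {z | T.dist z c ≤ r}).Connected := by
  rw [connected_iff]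
  refine ⟨?_, ⟨⟨c, by simp [dist_self]⟩⟩⟩
  rintro ⟨x, hx⟩ ⟨y, hy⟩
  exact (ball_reach hT c r _ x hx rfl).trans (ball_reach hT c r _ y hy rfl).symm

/-- Splitting a walk at a budgeted midpoint. -/
lemma exists_mid : ∀ {a b : W} (w : T.Walk a b) (r₁ r₂ : ℕ), w.length ≤ r₁ + r₂ →
    ∃ (z : W) (w1 : T.Walk a z) (w2 : T.Walk z b), w1.length ≤ r₁ ∧ w2.length ≤ r₂ := by
  intro a b w
  induction w with
  | nil => intro r₁ r₂ _; exact ⟨_, Walk.nil, Walk.nil, by simp, by simp⟩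
  | @cons a y b hadj w' IH =>
    intro r₁ r₂ hlen
    cases r₁ with
    | zero => exact ⟨a, Walk.nil, Walk.cons hadj w', by simp, by simpa using hlen⟩
    | succ r₁' =>
      obtain ⟨z, w1, w2, h1, h2⟩ := IH r₁' r₂ (by simpa [Nat.succ_add] using hlen)
      exact ⟨z, Walk.cons hadj w1, w2, by simpa using h1, h2⟩

/-- Distance is preserved by isomorphisms of connected graphs. -/
lemma iso_dist {W' : Type*} {T' : SimpleGraph W'} (φ : T ≃g T') (hT : T.Connected)
    (x y : W) : T'.dist (φ x) (φ y) = T.dist x y := by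
  have hT' : T'.Connected := φ.connected_iff.mp hT
  apply le_antisymm
  · obtain ⟨w, hw⟩ := hT.exists_walk_length_eq_dist x y
    calc T'.dist (φ x) (φ y) ≤ (w.map φ.toHom).length := dist_le _
    _ = T.dist x y := by rw [Walk.length_map, hw]
  · obtain ⟨w, hw⟩ := hT'.exists_walk_length_eq_dist (φ x) (φ y)
    have := dist_le (w.map φ.symm.toHom)
    simp only [Walk.length_map, hw] at this
    simpa using this

lemma iso_isTree {W' : Type*} {T' : SimpleGraph W'} (φ : T ≃g T') (h : T.IsTree) :
    T'.IsTree := by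
  refine ⟨φ.connected_iff.mp h.isConnected, ?_⟩
  intro v c hc
  exact h.IsAcyclic (c.map φ.symm.toHom) (hc.map φ.symm.injective)


section Sub

variable {W : Type*} (T : SimpleGraph W)

/-- Edge set of `T` as a type. -/
abbrev ES := {e : Sym2 W // e ∈ T.edgeSet}

/-- Adjacency of the subdivision graph. -/
def SubAdj : W ⊕ ES T → W ⊕ ES T → Prop
  | Sum.inl a, Sum.inr e => a ∈ e.1
  | Sum.inr e, Sum.inl a => a ∈ e.1
  | _, _ => False

/-- The subdivision of `T`: each edge is subdivided once. -/
def Sub : SimpleGraph (W ⊕ ES T) where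
  Adj := SubAdj T
  symm := ⟨by rintro (a | e) (b | f) h <;> simp only [SubAdj] at * <;> exact h⟩
  loopless := ⟨by rintro (a | e) h <;> exact h⟩
/-- Projection of the first component. -/
def fL : W ⊕ ES T → Option W
  | Sum.inl a => some a
  | Sum.inr _ => none

/-- Projection of the second component. -/
def fR : W ⊕ ES T → Option (Sym2 W)
  | Sum.inl _ => none
  | Sum.inr e => some e.1

variable {T}

lemma sub_adj_inl_inr {a : W} {e : ES T} : (Sub T).Adj (Sum.inl a) (Sum.inr e) ↔ a ∈ e.1 :=
  Iff.rfl

lemma sub_adj_inr_inl {a : W} {e : ES T} : (Sub T).Adj (Sum.inr e) (Sum.inl a) ↔ a ∈ e.1 :=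
  Iff.rfl

lemma sub_proj : ∀ (m : ℕ) {x y : W} (p : (Sub T).Walk (Sum.inl x) (Sum.inl y)),
    p.length = m → p.edges.Nodup →
    ∃ q : T.Walk x y, q.edges = p.support.filterMap (fR T) ∧
      q.support = p.support.filterMap (fL T) := by
  intro m
  induction m using Nat.strong_induction_on with
  | _ m IH =>
    intro x y p hp hnd
    cases p with
    | nil => exact ⟨Walk.nil, by simp [fR, fL]⟩
    | @cons _ b _ h q =>
      cases b with
      | inl a => exact h.elim
      | inr e =>
        cases q with
        | @cons _ c _ h₂ q₂ =>
          cases c with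
          | inr f => exact h₂.elim
          | inl x' =>
            have hx : x ∈ e.1 := h
            have hx' : x' ∈ e.1 := h₂
            simp only [Walk.length_cons] at hp
            simp only [Walk.edges_cons, List.nodup_cons, List.mem_cons] at hnd
            have hne : x ≠ x' := by
              rintro rfl
              exact hnd.1 (Or.inl (Sym2.eq_swap))
            have he : e.1 = s(x, x') := (Sym2.mem_and_mem_iff hne).mp ⟨hx, hx'⟩
            have hadj : T.Adj x x' := T.mem_edgeSet.mp (he ▸ e.2)
            obtain ⟨q', hE, hS⟩ := IH q₂.length (by omega) q₂ rfl hnd.2.2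
            refine ⟨Walk.cons hadj q', ?_, ?_⟩
            · simp [Walk.edges_cons, Walk.support_cons, List.filterMap_cons, fR, fL,
                hE, he]
            · simp [Walk.support_cons, List.filterMap_cons, fR, fL, hS]

lemma sub_acyclic (hT : T.IsTree) : (Sub T).IsAcyclic := by
  intro v c hc
  have hinl : ∃ x : W, Sum.inl x ∈ c.support := by
    cases v with
    | inl x => exact ⟨x, c.start_mem_support⟩
    | inr e =>
      cases c with
      | nil => exact absurd rfl hc.ne_nil
      | @cons _ b _ h q =>
        cases b with
        | inr f => exact h.elim
        | inl a => exact ⟨a, by simp⟩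
  obtain ⟨x, hx⟩ := hinl
  classical
  obtain ⟨c', hc'⟩ : ∃ c' : (Sub T).Walk (Sum.inl x) (Sum.inl x), c'.IsCycle :=
    ⟨c.rotate _ hx, hc.rotate hx⟩
  obtain ⟨q, hE, hS⟩ := sub_proj c'.length c' rfl hc'.edges_nodup
  have hsupp : c'.support = Sum.inl x :: c'.support.tail := c'.support_eq_cons
  -- injectivity facts for filterMap nodup
  have hfR : ∀ a a' (b : Sym2 W), b ∈ fR T a → b ∈ fR T a' → a = a' := by
    rintro (a | ea) (a' | ea') b hb hb' <;> simp [fR] at hb hb' <;>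
      subst hb <;> rw [Sum.inr.injEq] <;> exact Subtype.ext hb'.symm
  have hfL : ∀ a a' (b : W), b ∈ fL T a → b ∈ fL T a' → a = a' := by
    rintro (a | ea) (a' | ea') b hb hb' <;> simp [fL] at hb hb' <;>
      subst hb <;> rw [Sum.inl.injEq] <;> exact hb'.symm
  -- q is a trail
  have hqE : q.edges = c'.support.tail.filterMap (fR T) := by
    rw [hE, hsupp, List.filterMap_cons]; rfl
  have hqtrail : q.edges.Nodup := by
    rw [hqE]; exact hc'.support_nodup.filterMap hfR
  -- q is nonnil
  have hqne : q ≠ Walk.nil := by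
    cases c' with
    | nil => exact absurd rfl hc'.ne_nil
    | @cons _ b _ h₁ q₁ =>
      cases b with
      | inl a => exact h₁.elim
      | inr e =>
        intro hq
        have h0 : q.edges = [] := by rw [hq]; rfl
        rw [hE, Walk.support_cons, q₁.support_eq_cons] at h0
        simp [fR, List.filterMap_cons] at h0
        exact h0 _ _ q₁.start_mem_support
  -- q has nodup support tail
  have hqsupp : q.support.tail = c'.support.tail.filterMap (fL T) := by
    have h1 : q.support = x :: c'.support.tail.filterMap (fL T) := by
      rw [hS, hsupp, List.filterMap_cons]; rfl
    rw [h1]; rfl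
  have hqcyc : q.IsCycle := ⟨⟨⟨hqtrail⟩, hqne⟩, by
    rw [hqsupp]; exact hc'.support_nodup.filterMap hfL⟩
  exact hT.IsAcyclic q hqcyc




/-- Lift a walk of `T` to a walk of the subdivision. -/
def lift : ∀ {x y : W}, T.Walk x y → (Sub T).Walk (Sum.inl x) (Sum.inl y)
  | _, _, Walk.nil => Walk.nil
  | _, _, @Walk.cons _ _ x b _ h p =>
      Walk.cons
        (show (Sub T).Adj (Sum.inl x) (Sum.inr ⟨s(x, b), T.mem_edgeSet.mpr h⟩) from
          Sym2.mem_mk_left x b)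
        (Walk.cons
          (show (Sub T).Adj (Sum.inr ⟨s(x, b), T.mem_edgeSet.mpr h⟩) (Sum.inl b) from
            Sym2.mem_mk_right x b) (lift p))

lemma length_lift : ∀ {x y : W} (p : T.Walk x y), (lift p).length = 2 * p.length := by
  intro x y p
  induction p with
  | nil => rfl
  | cons h p IH => simp [lift, IH]; ring

lemma sub_connected (hT : T.Connected) : (Sub T).Connected := by
  have hreach : ∀ z : W ⊕ ES T, ∃ x : W, (Sub T).Reachable z (Sum.inl x) := by
    rintro (a | e)
    · exact ⟨a, Reachable.refl _⟩
    · exact ⟨e.1.out.1, (sub_adj_inr_inl.mpr (Sym2.out_fst_mem e.1)).reachable⟩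
  rw [connected_iff]
  refine ⟨?_, ⟨Sum.inl hT.nonempty.some⟩⟩
  intro u v
  obtain ⟨x, hx⟩ := hreach u
  obtain ⟨y, hy⟩ := hreach v
  obtain ⟨w⟩ := hT.preconnected x y
  exact (hx.trans ⟨lift w⟩).trans hy.symm

/-- Any walk in the subdivision between original vertices has length at least
twice the distance. -/
lemma sub_walk_ge (hT : T.Connected) :
    ∀ (m : ℕ) {x y : W} (p : (Sub T).Walk (Sum.inl x) (Sum.inl y)),
      p.length = m → 2 * T.dist x y ≤ m := by
  intro m
  induction m using Nat.strong_induction_on with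
  | _ m IH =>
    intro x y p hp
    cases p with
    | nil => simp [dist_self]
    | @cons _ b _ h q =>
      cases b with
      | inl a => exact h.elim
      | inr e =>
        cases q with
        | @cons _ c _ h₂ q₂ =>
          cases c with
          | inr f => exact h₂.elim
          | inl x' =>
            have hx : x ∈ e.1 := h
            have hx' : x' ∈ e.1 := h₂
            simp only [Walk.length_cons] at hp
            have hlt : q₂.length < m := by omega
            have h1 : 2 * T.dist x' y ≤ q₂.length := IH q₂.length hlt q₂ rfl
            have h2 : T.dist x y ≤ 1 + T.dist x' y := by
              rcases eq_or_ne x x' with rfl | hne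
              · omega
              · have hadj : T.Adj x x' :=
                  T.mem_edgeSet.mp (((Sym2.mem_and_mem_iff hne).mp ⟨hx, hx'⟩) ▸ e.2)
                calc T.dist x y ≤ T.dist x x' + T.dist x' y := hT.dist_triangle
                _ ≤ 1 + T.dist x' y := by
                    have : T.dist x x' ≤ 1 := dist_le (Walk.cons hadj Walk.nil)
                    omega
            omega


end Sub

end LeafRootAux

/-- If `G` admits a `k`-leaf root, then `G` admits a radial subtree model in which every
subtree has radius at most `k`. -/
theorem leafRoot_to_RSModel {V W : Type*} [Fintype V] [Fintype W] (G : SimpleGraph V)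
    (T : SimpleGraph W) (τ : V → W) (k : ℕ) (h : IsLeafRoot G T τ k) :
    ∃ (W' : Type) (_ : Fintype W') (T' : SimpleGraph W') (c : V → W') (r : V → ℕ),
      IsRSModel G T' c r ∧ ∀ v : V, r v ≤ k := by
  classical
  obtain ⟨hTree, hInj, -, -, hAdj⟩ := h
  have hTconn := hTree.isConnected
  let n := Fintype.card W
  let σ : W ≃ Fin n := Fintype.equivFin W
  let T₁ : SimpleGraph (Fin n) := T.comap σ.symm.toEmbedding
  let φ : T ≃g T₁ := (SimpleGraph.Iso.comap σ.symm T).symm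
  have hTree₁ : T₁.IsTree := LeafRootAux.iso_isTree φ hTree
  have hconn₁ := hTree₁.isConnected
  have hdist : ∀ u v : W, T₁.dist (φ u) (φ v) = T.dist u v :=
    fun u v => LeafRootAux.iso_dist φ hTconn u v
  let S := LeafRootAux.Sub T₁
  haveI : Finite (LeafRootAux.ES T₁) := by unfold LeafRootAux.ES; infer_instance
  have hSconn : S.Connected := LeafRootAux.sub_connected hconn₁
  have hStree : S.IsTree := ⟨hSconn, LeafRootAux.sub_acyclic hTree₁⟩
  refine ⟨Fin n ⊕ LeafRootAux.ES T₁, Fintype.ofFinite _, S,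
    fun v => Sum.inl (φ (τ v)), fun _ => k, ⟨hStree, ?_, ?_⟩, fun _ => le_rfl⟩
  · intro v
    exact LeafRootAux.ball_connected hSconn _ k
  · intro u v huv
    have key : S.dist (Sum.inl (φ (τ u))) (Sum.inl (φ (τ v))) ≤ 2 * k ↔
        T.dist (τ u) (τ v) ≤ k := by
      constructor
      · intro hle
        obtain ⟨p, hp⟩ :=
          hSconn.exists_walk_length_eq_dist (Sum.inl (φ (τ u))) (Sum.inl (φ (τ v)))
        have h1 := LeafRootAux.sub_walk_ge hconn₁ p.length p rfl
        rw [hp] at h1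
        have h2 : T₁.dist (φ (τ u)) (φ (τ v)) ≤ k := by omega
        rwa [hdist] at h2
      · intro hle
        rw [← hdist] at hle
        obtain ⟨w, hw⟩ := hconn₁.exists_walk_length_eq_dist (φ (τ u)) (φ (τ v))
        calc S.dist _ _ ≤ (LeafRootAux.lift w).length := dist_le _
        _ = 2 * w.length := LeafRootAux.length_lift w
        _ ≤ 2 * k := by rw [hw]; omega
    constructor
    · rintro ⟨z, hz1, hz2⟩
      have hz1' : S.dist z (Sum.inl (φ (τ u))) ≤ k := hz1
      have hz2' : S.dist z (Sum.inl (φ (τ v))) ≤ k := hz2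
      have hd : S.dist (Sum.inl (φ (τ u))) (Sum.inl (φ (τ v))) ≤ 2 * k := by
        calc S.dist (Sum.inl (φ (τ u))) (Sum.inl (φ (τ v)))
            ≤ S.dist (Sum.inl (φ (τ u))) z + S.dist z (Sum.inl (φ (τ v))) :=
              hSconn.dist_triangle
        _ ≤ k + k := add_le_add (by rwa [dist_comm]) hz2'
        _ = 2 * k := by omega
      exact (hAdj u v huv).mpr (key.mp hd)
    · intro hadj
      have hd := key.mpr ((hAdj u v huv).mp hadj)
      obtain ⟨p, hp⟩ :=
        hSconn.exists_walk_length_eq_dist (Sum.inl (φ (τ u))) (Sum.inl (φ (τ v)))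
      obtain ⟨z, w1, w2, h1, h2⟩ := LeafRootAux.exists_mid p k k (by omega)
      refine ⟨z, ?_, ?_⟩
      · show S.dist z (Sum.inl (φ (τ u))) ≤ k
        rw [dist_comm]
        exact le_trans (dist_le w1) h1
      · show S.dist z (Sum.inl (φ (τ v))) ≤ k
        exact le_trans (dist_le w2) h2
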